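/- arXiv:1612.07806 — 2 statements merged into one kernel-verified Lean document; each statement's English description precedes it below -/
import Mathlib

section
/- Let 𝕂 be ℝ or ℂ, let A be an m×d matrix over 𝕂, let x ∈ 𝕂^d, and let Ω ⊆ Fin d. Set T = supp(x) ∪ Ω. Then ‖((I − A*A)x)_Ω‖ ≤ ‖I − A_T* A_T‖ · ‖x_T‖, where A_T is the column submatrix of A with columns indexed by T, v_Ω denotes the restriction of a vector v to the coordinates in Ω, ‖·‖ is the Euclidean norm on vectors, and the matrix norm is the ℓ2→ℓ2 operator norm. -/
open Matrix
open scoped Matrix.Norms.L2Operator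

/-- Euclidean (ℓ2) norm of a finitely indexed vector. -/
noncomputable def eNorm {𝕂 : Type*} [RCLike 𝕂] {ι : Type*} [Fintype ι] (x : ι → 𝕂) : ℝ :=
  Real.sqrt (∑ i, ‖x i‖ ^ 2)

/-- The column submatrix of `A` consisting of the columns indexed by `Ω`. -/
def colSubmatrix {𝕂 : Type*} [RCLike 𝕂] {m : Type*} {d : Type*} (A : Matrix m d 𝕂)
    (Ω : Finset d) : Matrix m (↥Ω) 𝕂 :=
  A.submatrix id Subtype.val

/-- The restriction of a vector `v` to the coordinates in `Ω`. -/
def restrictVec {𝕂 : Type*} [RCLike 𝕂] {d : Type*} (v : d → 𝕂) (Ω : Finset d) : ↥Ω → 𝕂 :=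
  fun j => v j.val

/-- The support of a finitely indexed vector, as a `Finset`. -/
noncomputable def finSupp {𝕂 : Type*} [RCLike 𝕂] {d : Type*} [Fintype d] (x : d → 𝕂) :
    Finset d :=
  Finset.univ.filter (fun j => x j ≠ 0)

lemma eNorm_eq_euclidean {𝕂 : Type*} [RCLike 𝕂] {ι : Type*} [Fintype ι] (v : ι → 𝕂) :
    eNorm v = ‖(WithLp.equiv 2 (ι → 𝕂)).symm v‖ := by
  rw [EuclideanSpace.norm_eq]
  rfl

theorem restricting_columns {𝕂 : Type*} [RCLike 𝕂] {m d : ℕ}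
    (A : Matrix (Fin m) (Fin d) 𝕂) (x : Fin d → 𝕂) (Ω : Finset (Fin d)) :
    eNorm (restrictVec ((1 - Aᴴ * A).mulVec x) Ω) ≤
      ‖(1 : Matrix (↥(finSupp x ∪ Ω)) (↥(finSupp x ∪ Ω)) 𝕂) -
          (colSubmatrix A (finSupp x ∪ Ω))ᴴ * colSubmatrix A (finSupp x ∪ Ω)‖ *
        eNorm (restrictVec x (finSupp x ∪ Ω)) := by
  classical
  set T := finSupp x ∪ Ω with hT
  set B := (1 : Matrix (↥T) (↥T) 𝕂) - (colSubmatrix A T)ᴴ * colSubmatrix A T with hB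
  set y := restrictVec x T with hy
  have hx0 : ∀ k : Fin d, k ∉ T → x k = 0 := by
    intro k hk
    by_contra h
    exact hk (Finset.mem_union_left _ (by simp [finSupp, h]))
  have hent : ∀ (j k : ↥T), ((colSubmatrix A T)ᴴ * colSubmatrix A T) j k
      = (Aᴴ * A) j.val k.val := by
    intro j k
    simp [Matrix.mul_apply, colSubmatrix, Matrix.conjTranspose_apply]
  have key : ∀ j : ↥T, ((1 - Aᴴ * A).mulVec x) j.val = B.mulVec y j := by
    intro j
    simp only [hB, Matrix.sub_mulVec, Matrix.one_mulVec, Pi.sub_apply]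
    congr 1
    have h2 : ((colSubmatrix A T)ᴴ * colSubmatrix A T).mulVec y j
        = ∑ k : ↥T, (Aᴴ * A) j.val k.val * x k.val := by
      simp only [Matrix.mulVec, dotProduct]
      exact Finset.sum_congr rfl fun k _ => by rw [hent]; rfl
    have h3 : (Aᴴ * A).mulVec x j.val = ∑ k ∈ T, (Aᴴ * A) j.val k * x k := by
      simp only [Matrix.mulVec, dotProduct]
      refine (Finset.sum_subset (Finset.subset_univ T) ?_).symm
      intro k _ hk
      rw [hx0 k hk, mul_zero]
    rw [h2, h3]
    exact (Finset.sum_coe_sort T (fun k => (Aᴴ * A) j.val k * x k)).symm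
  -- norm of restriction to Ω ≤ norm over T
  have hΩT : Ω ⊆ T := Finset.subset_union_right
  have step1 : eNorm (restrictVec ((1 - Aᴴ * A).mulVec x) Ω) ≤ eNorm (B.mulVec y) := by
    unfold eNorm
    apply Real.sqrt_le_sqrt
    have e1 : ∑ j : ↥Ω, ‖restrictVec ((1 - Aᴴ * A).mulVec x) Ω j‖ ^ 2
        = ∑ j ∈ Ω, ‖((1 - Aᴴ * A).mulVec x) j‖ ^ 2 :=
      Finset.sum_coe_sort Ω (fun j => ‖((1 - Aᴴ * A).mulVec x) j‖ ^ 2)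
    have e2 : ∑ j : ↥T, ‖B.mulVec y j‖ ^ 2
        = ∑ j ∈ T, ‖((1 - Aᴴ * A).mulVec x) j‖ ^ 2 := by
      have := Finset.sum_coe_sort T (fun j => ‖((1 - Aᴴ * A).mulVec x) j‖ ^ 2)
      rw [← this]
      exact Finset.sum_congr rfl fun j _ => by rw [key j]
    rw [e1, e2]
    exact Finset.sum_le_sum_of_subset_of_nonneg hΩT
      (fun j _ _ => by positivity)
  have step2 : eNorm (B.mulVec y) ≤ ‖B‖ * eNorm y := by
    rw [eNorm_eq_euclidean, eNorm_eq_euclidean]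
    exact B.l2_opNorm_mulVec ((WithLp.equiv 2 (↥T → 𝕂)).symm y)
  exact step1.trans step2
end

section
/- For all real numbers c and b with 0 ≤ c ≤ 1/√3 and b ≥ 0, the inequality (√(2(1−c)) + b)/(1−c) ≤ √2 + b + ((4.733·b + 2.637)/2)·c holds. -/
theorem linear_bound (c b : ℝ) (hc0 : 0 ≤ c) (hc : c ≤ 1 / Real.sqrt 3) (hb : 0 ≤ b) :
    (Real.sqrt (2 * (1 - c)) + b) / (1 - c) ≤
      Real.sqrt 2 + b + ((4.733 * b + 2.637) / 2) * c := by
  have hq2 : (Real.sqrt 3) ^ 2 = 3 := Real.sq_sqrt (by norm_num)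
  have hq0 : (0:ℝ) < Real.sqrt 3 := Real.sqrt_pos.mpr (by norm_num)
  set q := Real.sqrt 3 with hqdef
  have hql : (1.7320508:ℝ) ≤ q := by nlinarith
  have hcq : c * q ≤ 1 := (le_div_iff₀ hq0).mp hc
  have hcu : c ≤ 0.5773503 := by nlinarith
  have ht : (0:ℝ) < 1 - c := by linarith
  have hr2 : (Real.sqrt 2) ^ 2 = 2 := Real.sq_sqrt (by norm_num)
  have hr0 : (0:ℝ) ≤ Real.sqrt 2 := Real.sqrt_nonneg 2
  set r := Real.sqrt 2 with hrdef
  have hrl : (1.4142135:ℝ) ≤ r := by nlinarith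
  have hru : r ≤ (1.4142136:ℝ) := by nlinarith
  rw [div_le_iff₀ ht]
  have h1 : b ≤ (b + 4.733/2*b*c)*(1-c) := by nlinarith [mul_nonneg hb hc0, mul_nonneg (mul_nonneg hb hc0) hc0]
  have hX0 : (0:ℝ) ≤ (r + 2.637/2*c)*(1-c) := by positivity
  have hkey : 2*(1-c) ≤ ((r + 2.637/2*c)*(1-c))^2 := by
    nlinarith [mul_nonneg hc0 (by linarith : (0:ℝ) ≤ 0.5773503 - c),
      mul_nonneg (mul_nonneg hc0 hc0) (by linarith : (0:ℝ) ≤ 0.5773503 - c),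
      mul_nonneg (mul_nonneg hc0 hc0) (by linarith : (0:ℝ) ≤ r - 1.4142135),
      mul_nonneg hc0 (by linarith : (0:ℝ) ≤ r - 1.4142135),
      sq_nonneg c, mul_nonneg (mul_nonneg hc0 hc0) hc0]
  have h2 : Real.sqrt (2*(1-c)) ≤ (r + 2.637/2*c)*(1-c) := by
    calc Real.sqrt (2*(1-c)) ≤ Real.sqrt (((r + 2.637/2*c)*(1-c))^2) := Real.sqrt_le_sqrt hkey
    _ = (r + 2.637/2*c)*(1-c) := Real.sqrt_sq hX0
  nlinarith [h1, h2, mul_nonneg hb hc0]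
end
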